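/- For every n ≥ 1, the constant coefficient a(2n, 0) of the polynomial P_{2n} equals the Euler number E_{2n}, where Euler numbers are defined by the expansion 1/cosh(t) = Σ_{n≥0} E_n t^n/n!. -/

import Mathlib

open Polynomial

/-- The Sheffer-type polynomials `P n = R^n 1` where `(Rf)(x) = x f(x) - f'(x) - x f''(x)`. -/
noncomputable def shefferP : ℕ → Polynomial ℝ
  | 0 => 1
  | n + 1 =>
      X * shefferP n - derivative (shefferP n) - X * derivative (derivative (shefferP n))

/-- The Euler numbers, defined by 1/cosh t = Σₙ Eₙ tⁿ/n!, i.e. Eₙ is the n-th derivative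
of sech at 0. -/
noncomputable def eulerNumber (n : ℕ) : ℝ :=
  iteratedDeriv n (fun t : ℝ => (Real.cosh t)⁻¹) 0

noncomputable def shefferQ : ℕ → Polynomial ℝ
  | 0 => 1
  | n + 1 => (1 - X ^ 2) * derivative (shefferQ n) - X * shefferQ n

lemma hasDerivAt_tanh' (x : ℝ) :
    HasDerivAt Real.tanh ((Real.cosh x ^ 2)⁻¹) x := by
  have hc : Real.cosh x ≠ 0 := (Real.cosh_pos x).ne'
  have h : HasDerivAt (fun t => Real.sinh t * (Real.cosh t)⁻¹)
      (Real.cosh x * (Real.cosh x)⁻¹ + Real.sinh x * (-Real.sinh x / Real.cosh x ^ 2)) x :=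
    (Real.hasDerivAt_sinh x).mul ((Real.hasDerivAt_cosh x).inv hc)
  have hfun : Real.tanh = fun t => Real.sinh t * (Real.cosh t)⁻¹ := by
    funext t; rw [Real.tanh_eq_sinh_div_cosh]; ring
  rw [hfun]
  convert h using 1
  have h2 : Real.cosh x ^ 2 - Real.sinh x ^ 2 = 1 := Real.cosh_sq_sub_sinh_sq x
  field_simp
  nlinarith [h2]

lemma iteratedDeriv_sech (n : ℕ) :
    iteratedDeriv n (fun t : ℝ => (Real.cosh t)⁻¹)
      = fun t => (shefferQ n).eval (Real.tanh t) * (Real.cosh t)⁻¹ := by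
  induction n with
  | zero => simp [shefferQ]
  | succ n ih =>
    rw [iteratedDeriv_succ, ih]
    funext t
    have hc : Real.cosh t ≠ 0 := (Real.cosh_pos t).ne'
    have h1 : HasDerivAt (fun s => (shefferQ n).eval (Real.tanh s))
        ((derivative (shefferQ n)).eval (Real.tanh t) * (Real.cosh t ^ 2)⁻¹) t :=
      (Polynomial.hasDerivAt (shefferQ n) (Real.tanh t)).comp t (hasDerivAt_tanh' t)
    have h2 : HasDerivAt (fun s => (Real.cosh s)⁻¹)
        (-Real.sinh t / Real.cosh t ^ 2) t := (Real.hasDerivAt_cosh t).inv hc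
    have h := HasDerivAt.deriv (f := fun s => (shefferQ n).eval (Real.tanh s) * (Real.cosh s)⁻¹) (h1.mul h2)
    rw [h]
    have htanh : Real.tanh t = Real.sinh t / Real.cosh t := Real.tanh_eq_sinh_div_cosh t
    have h2' : Real.cosh t ^ 2 - Real.sinh t ^ 2 = 1 := Real.cosh_sq_sub_sinh_sq t
    show _ = ((1 - X ^ 2) * derivative (shefferQ n) - X * shefferQ n).eval (Real.tanh t) * (Real.cosh t)⁻¹
    simp only [eval_mul, eval_sub, eval_one, eval_pow, eval_X]
    rw [htanh]
    field_simp
    ring_nf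
    linear_combination -(eval (Real.sinh t * (Real.cosh t)⁻¹) (derivative (shefferQ n))) * h2'

lemma coeff_rel (n : ℕ) (k : ℕ) :
    (shefferQ n).coeff k = (-1:ℝ)^n * (Nat.factorial k) * (shefferP n).coeff k := by
  induction n generalizing k with
  | zero =>
    show (1 : Polynomial ℝ).coeff k = (-1:ℝ)^0 * _ * (1 : Polynomial ℝ).coeff k
    rw [coeff_one]
    split <;> simp_all [Nat.factorial]
  | succ n ih =>
    have hQ : shefferQ (n+1)
        = derivative (shefferQ n) - X*(X*derivative (shefferQ n)) - X * shefferQ n := by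
      show (1 - X^2) * derivative (shefferQ n) - X * shefferQ n = _
      ring
    have hP : shefferP (n+1) = X * shefferP n - derivative (shefferP n)
        - X * derivative (derivative (shefferP n)) := rfl
    rw [hQ, hP]
    match k with
    | 0 =>
      simp only [coeff_sub, coeff_derivative, mul_coeff_zero, coeff_X_zero, zero_mul, ih,
        Nat.factorial]
      push_cast
      ring
    | 1 =>
      simp only [coeff_sub, coeff_derivative, coeff_X_mul, mul_coeff_zero, coeff_X_zero,
        zero_mul, ih, Nat.factorial]
      push_cast
      ring
    | (k+2) =>
      simp only [coeff_sub, coeff_derivative, coeff_X_mul, ih, Nat.factorial]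
      push_cast
      ring

/-- The constant coefficient of P_{2n} is the Euler number E_{2n}. -/
theorem shefferP_constant_coeff_eq_eulerNumber (n : ℕ) (hn : 1 ≤ n) :
    (shefferP (2 * n)).coeff 0 = eulerNumber (2 * n) := by
  have h := congrFun (iteratedDeriv_sech (2 * n)) 0
  have : eulerNumber (2 * n) = (shefferQ (2 * n)).eval (Real.tanh 0) * (Real.cosh 0)⁻¹ := h
  rw [this, Real.tanh_zero, Real.cosh_zero, inv_one, mul_one,
    ← Polynomial.coeff_zero_eq_eval_zero, coeff_rel]
  simp [Nat.factorial, (even_two_mul n).neg_one_pow]
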